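/- Define the structure G with universe ℕ ∪ {∞}, A = ℕ, f = {(n, n+1) : n ∈ ℕ}, R = {(u,v) : u ≤ v} (with n ≤ ∞ for all n), and for each k ∈ ℕ ∪ {∞}, R_k = {(u,v) : u ≤ v ∧ (k < u ∨ v ≤ k)}, where f_k(u,v) means f(u,v) ∧ u ≠ k. Then G satisfies all of Nelson's seven translated axiom schemes (with R_k interpreting the reachability-avoiding-k relations), but G violates NoExit[A,f]: no f-edge leaves A, yet R(0,∞) holds with ∞ ∉ A. Hence Nelson's axioms do not imply NoExit. -/
import Mathlib


open scoped Classical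

/-- The universe ℕ ∪ {∞}. -/
abbrev GV : Type := ℕ∞

/-- The color class A = ℕ (everything except ∞). -/
def GA : Set GV := {x | x ≠ ⊤}

/-- f = successor edges on ℕ; ∞ is isolated. -/
def Gf (u v : GV) : Prop := ∃ n : ℕ, u = (n : GV) ∧ v = ((n + 1 : ℕ) : GV)

/-- R interprets f*: u ≤ v. -/
def GR (u v : GV) : Prop := u ≤ v

/-- R_k interprets (f^k)*: u ≤ v ∧ (k < u ∨ v ≤ k). -/
def GRx (k u v : GV) : Prop := u ≤ v ∧ (k < u ∨ v ≤ k)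

/-- f^x(u,v) := f(u,v) ∧ u ≠ x. -/
def Gfx (x u v : GV) : Prop := Gf u v ∧ u ≠ x

theorem stmt_12 :
    -- (N1)
    (∀ x u v : GV, GRx x u v ↔ (u = v ∨ ∃ z, Gfx x u z ∧ GRx x z v)) ∧
    -- (N2)
    (∀ x u v w : GV, GRx x u v → GRx x v w → GRx x u w) ∧
    -- (N3)
    (∀ x u v : GV, GRx x u v → GR u v) ∧
    -- (N4)
    (∀ x y z u : GV, GRx y u x → GRx z u y → GRx z u x) ∧
    -- (N5)
    (∀ x y u : GV, GR u x → GRx y u x ∨ GRx x u y) ∧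
    -- (N6)
    (∀ x y z u : GV, GRx y u x → GRx z u y → GRx z x y) ∧
    -- (N7)
    (∀ x u v : GV, Gf x u → GR u v → GRx x u v) ∧
    -- no f-edge leaves A
    (∀ u v : GV, u ∈ GA → v ∉ GA → ¬ Gf u v) ∧
    -- yet R(0,∞) holds with ∞ ∉ A: NoExit[A,f] fails
    GR (0 : GV) ⊤ ∧ (0 : GV) ∈ GA ∧ (⊤ : GV) ∉ GA := by
  refine ⟨?n1, ?n2, ?n3, ?n4, ?n5, ?n6, ?n7, ?noedge, le_top, fun h => by simp at h, fun h => h rfl⟩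
  case n1 =>
    intro x u v
    constructor
    · rintro ⟨huv, hside⟩
      rcases eq_or_ne u v with h | h
      · exact Or.inl h
      · have hlt : u < v := lt_of_le_of_ne huv h
        have hut : u ≠ ⊤ := hlt.ne_top
        lift u to ℕ using hut with n
        refine Or.inr ⟨((n + 1 : ℕ) : GV), ⟨⟨n, rfl, rfl⟩, ?_⟩, ?_, ?_⟩
        · rcases hside with h1 | h1
          · exact h1.ne'
          · exact (lt_of_lt_of_le hlt h1).ne
        · exact Order.add_one_le_of_lt hlt
        · rcases hside with h1 | h1
          · exact Or.inl (h1.trans_le (by exact_mod_cast Nat.le_succ n))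
          · exact Or.inr h1
    · rintro (rfl | ⟨z, ⟨⟨n, rfl, rfl⟩, hne⟩, hzv, hside⟩)
      · exact ⟨le_rfl, (lt_or_ge x _)⟩
      · refine ⟨le_trans (by exact_mod_cast Nat.le_succ n) hzv, ?_⟩
        rcases hside with h1 | h1
        · left
          have hxn : x ≤ (n : GV) :=
            (ENat.lt_add_one_iff (ENat.coe_ne_top n)).mp (by exact_mod_cast h1)
          exact lt_of_le_of_ne hxn (Ne.symm hne)
        · exact Or.inr h1
  case n2 =>
    rintro x u v w ⟨huv, h1⟩ ⟨hvw, h2⟩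
    refine ⟨huv.trans hvw, ?_⟩
    rcases h2 with h2 | h2
    · rcases h1 with h1 | h1
      · exact Or.inl h1
      · exact absurd h2 (not_lt_of_ge h1)
    · exact Or.inr h2
  case n3 => rintro x u v ⟨h, -⟩; exact h
  case n4 =>
    rintro x y z u ⟨hux, h1⟩ ⟨huy, h2⟩
    have hxy : x ≤ y := by
      rcases h1 with h1 | h1
      · exact absurd h1 (not_lt_of_ge huy)
      · exact h1
    exact ⟨hux, h2.imp_right fun h => hxy.trans h⟩
  case n5 =>
    intro x y u hux
    rcases le_or_gt u y with h | h
    · rcases le_or_gt x y with h2 | h2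
      · exact Or.inl ⟨hux, Or.inr h2⟩
      · exact Or.inr ⟨h, Or.inr h2.le⟩
    · exact Or.inl ⟨hux, Or.inl h⟩
  case n6 =>
    rintro x y z u ⟨hux, h1⟩ ⟨huy, h2⟩
    have hxy : x ≤ y := by
      rcases h1 with h1 | h1
      · exact absurd h1 (not_lt_of_ge huy)
      · exact h1
    exact ⟨hxy, h2.imp_left fun h => h.trans_le hux⟩
  case n7 =>
    rintro x u v ⟨n, rfl, rfl⟩ huv
    exact ⟨huv, Or.inl (by exact_mod_cast Nat.lt_succ_self n)⟩
  case noedge =>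
    rintro u v hu hv ⟨n, rfl, rfl⟩
    apply hv
    simp only [GA, Set.mem_setOf_eq]
    exact_mod_cast ENat.coe_ne_top (n+1)
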